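/- Let G be a ℤ/3-flow-critical graph, and for each vertex v let x_v ∈ Δ_v. If Σ_{v ∈ V(G)} x_v = 0 and x_u = 0 for some vertex u, then x_w = 0 for every vertex w. -/

import Mathlib

open Finset

/-- A multigraph with a fixed orientation of its edges: each edge has a
tail and a head. -/
structure MultiGraph where
  V : Type
  E : Type
  [fV : Fintype V]
  [fE : Fintype E]
  [dV : DecidableEq V]
  [dE : DecidableEq E]
  tail : E → V
  head : E → V

namespace MultiGraph

attribute [instance] fV fE dV dE

variable (G : MultiGraph)

/-- The incidence sign `[v,e]`: `1` if `e` is oriented towards `v`, `-1` if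
oriented away from `v`, `0` otherwise (so `0` on loops). -/
def sign (v : G.V) (e : G.E) : ℤ :=
  (if G.head e = v then 1 else 0) - (if G.tail e = v then 1 else 0)

/-- A flow with values in an abelian group: conservation at every vertex. -/
def IsFlow {A : Type*} [AddCommGroup A] (φ : G.E → A) : Prop :=
  ∀ v : G.V, ∑ e : G.E, G.sign v e • φ e = 0

/-- A nowhere-zero flow. -/
def IsNZFlow {A : Type*} [AddCommGroup A] (φ : G.E → A) : Prop :=
  G.IsFlow φ ∧ ∀ e : G.E, φ e ≠ 0

/-- `G` admits a nowhere-zero `A`-flow. -/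
def HasNZFlow (A : Type*) [AddCommGroup A] : Prop :=
  ∃ φ : G.E → A, G.IsNZFlow φ

/-- Two vertices are joined by an edge (in either direction). -/
def Adj (a b : G.V) : Prop :=
  ∃ e : G.E, (G.tail e = a ∧ G.head e = b) ∨ (G.tail e = b ∧ G.head e = a)

/-- `G` is connected. -/
def Connected : Prop :=
  Nonempty G.V ∧ ∀ a b : G.V, Relation.ReflTransGen G.Adj a b

/-- Contraction of a set of edges: the contracted edges are removed and
their endpoints identified. -/
noncomputable def contract (S : Set G.E) : MultiGraph := by
  classical
  exact
  { V := Quot (fun a b : G.V => ∃ e ∈ S, G.tail e = a ∧ G.head e = b)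
    E := {e : G.E // e ∉ S}
    fV := Fintype.ofSurjective (Quot.mk _) (Quot.mk_surjective)
    tail := fun e => Quot.mk _ (G.tail e.1)
    head := fun e => Quot.mk _ (G.head e.1) }

/-- `G` is `A`-flow-critical: `G` is connected, has no nowhere-zero `A`-flow,
but every single-edge contraction does. -/
noncomputable def FlowCritical (A : Type*) [AddCommGroup A] : Prop :=
  G.Connected ∧ ¬ G.HasNZFlow A ∧ ∀ e : G.E, (G.contract {e}).HasNZFlow A

/-- The degree of a vertex (loops counted twice). -/
def degree (v : G.V) : ℕ :=
  (univ.filter fun e : G.E => G.tail e = v).card +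
    (univ.filter fun e : G.E => G.head e = v).card

/-- Incidence of a vertex and an edge. -/
def Incident (v : G.V) (e : G.E) : Prop := G.tail e = v ∨ G.head e = v

/-- The vector `δ_v ∈ (ℤ/3)^{E(G)}`, `δ_v(e) = [v,e]`. -/
def deltaV (v : G.V) : G.E → ZMod 3 := fun e => (G.sign v e : ZMod 3)

/-- The vector `δ_{v,e₁,e₂}`: `[v,e₁]` on `e₁`, `-[v,e₂]` on `e₂`, `0` elsewhere. -/
def deltaPair (v : G.V) (e₁ e₂ : G.E) : G.E → ZMod 3 := fun e =>
  if e = e₁ then (G.sign v e₁ : ZMod 3)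
  else if e = e₂ then -(G.sign v e₂ : ZMod 3) else 0

/-- The dot product on `(ℤ/3)^{E(G)}`. -/
def dot (c φ : G.E → ZMod 3) : ZMod 3 := ∑ e : G.E, c e * φ e

/-- The subspace `Δ_v`: the span of `δ_v` if `deg v ≠ 3`, and the span of `δ_v`
together with the vectors `δ_{v,e₁,e₂}` for incident edges if `deg v = 3`. -/
def DeltaSub (v : G.V) : Submodule (ZMod 3) (G.E → ZMod 3) :=
  if G.degree v = 3 then
    Submodule.span (ZMod 3) ({G.deltaV v} ∪
      {x | ∃ e₁ e₂ : G.E, e₁ ≠ e₂ ∧ G.Incident v e₁ ∧ G.Incident v e₂ ∧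
        x = G.deltaPair v e₁ e₂})
  else Submodule.span (ZMod 3) {G.deltaV v}

/-- Isomorphism of multigraphs (edges may be reversed, since the orientation
is an arbitrary fixed choice). -/
def Iso (G H : MultiGraph) : Prop :=
  ∃ (f : G.V ≃ H.V) (g : G.E ≃ H.E), ∀ e : G.E,
    (H.tail (g e) = f (G.tail e) ∧ H.head (g e) = f (G.head e)) ∨
    (H.tail (g e) = f (G.head e) ∧ H.head (g e) = f (G.tail e))

/-- The graph with two vertices joined by `m` parallel edges. -/
def banana (m : ℕ) : MultiGraph where
  V := Bool
  E := Fin m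
  tail := fun _ => false
  head := fun _ => true

/-- The wheel `W_k`: a cycle on `k` vertices plus a hub (`none`) adjacent to all
of them.  `Sum.inl` are the cycle edges, `Sum.inr` the spokes. -/
def wheel (k : ℕ) : MultiGraph where
  V := Option (Fin k)
  E := Fin k ⊕ Fin k
  tail := fun e => Sum.elim (fun i => some i) (fun i => some i) e
  head := fun e => Sum.elim (fun i => some (finRotate k i)) (fun _ => none) e

/-- `K₂`. -/
def K2 : MultiGraph := banana 1

/-- `K₄` (the wheel on `3 + 1` vertices). -/
def K4 : MultiGraph := wheel 3

/-- `G` is a wheel. -/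
def IsWheel : Prop := ∃ k : ℕ, 3 ≤ k ∧ Iso G (wheel k)

end MultiGraph
section SumHelpers

open Finset

variable {α M : Type*} [Fintype α] [DecidableEq α] [AddCommMonoid M]

lemma aux_sum_split (e : α) {F : Fintype {f : α // f ∉ ({e} : Set α)}} (g : α → M) :
    ∑ f, g f = g e + ∑ f : {f : α // f ∉ ({e} : Set α)}, g f.1 := by
  rw [← Finset.sum_subtype (Finset.univ.erase e)
      (fun x => by simp [Set.mem_singleton_iff]) g]
  exact (Finset.add_sum_erase _ g (mem_univ e)).symm

lemma aux_sum_two {e1 e2 : α} (h : e1 ≠ e2) (a b : α → M) :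
    ∑ f, (if f = e1 then a f else if f = e2 then b f else 0) = a e1 + b e2 := by
  have key : ∀ f, (if f = e1 then a f else if f = e2 then b f else 0)
      = (if f = e1 then a f else 0) + (if f = e2 then b f else 0) := by
    intro f
    by_cases h1 : f = e1
    · subst h1; simp [h]
    · by_cases h2 : f = e2
      · subst h2; simp [h1]
      · simp [h1, h2]
  simp only [key, Finset.sum_add_distrib, Finset.sum_ite_eq' Finset.univ, mem_univ, if_true]

lemma aux_fintype_sum_eq {β : Type*} {F1 F2 : Fintype β} (g : β → M) :
    @Finset.sum β M _ (@Finset.univ β F1) g = @Finset.sum β M _ (@Finset.univ β F2) g := by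
  rw [Subsingleton.elim F1 F2]

end SumHelpers
namespace MultiGraph

open Finset

variable {G : MultiGraph}

instance (v : G.V) (e : G.E) : Decidable (G.Incident v e) :=
  decidable_of_iff (G.tail e = v ∨ G.head e = v) Iff.rfl

lemma sign_eq_zero {v : G.V} {e : G.E} (h : ¬ G.Incident v e) : G.sign v e = 0 := by
  simp only [Incident, not_or] at h
  simp [sign, h.1, h.2]

lemma sign_cases {v : G.V} {e : G.E} (hl : G.tail e ≠ G.head e) (h : G.Incident v e) :
    G.sign v e = 1 ∨ G.sign v e = -1 := by
  rcases h with h | h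
  · right
    have h2 : G.head e ≠ v := fun hh => hl (h.trans hh.symm)
    simp [sign, h, h2]
  · left
    have h2 : G.tail e ≠ v := fun hh => hl (hh.trans h.symm)
    simp [sign, h, h2]

lemma sign_cast_ne {v : G.V} {e : G.E} (hl : G.tail e ≠ G.head e) (h : G.Incident v e) :
    ((G.sign v e : ℤ) : ZMod 3) ≠ 0 := by
  rcases sign_cases hl h with h' | h' <;> rw [h'] <;> decide

lemma sign_cast_sq {v : G.V} {e : G.E} (hl : G.tail e ≠ G.head e) (h : G.Incident v e) :
    ((G.sign v e : ℤ) : ZMod 3) * ((G.sign v e : ℤ) : ZMod 3) = 1 := by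
  rcases sign_cases hl h with h' | h' <;> rw [h'] <;> decide

lemma card_incident {v : G.V} (hl : ∀ e, G.tail e ≠ G.head e) :
    (Finset.univ.filter (fun e => G.Incident v e)).card = G.degree v := by
  unfold degree
  have hset : Finset.univ.filter (fun e => G.Incident v e)
      = Finset.univ.filter (fun e => G.tail e = v) ∪ Finset.univ.filter (fun e => G.head e = v) := by
    ext f
    simp only [Finset.mem_filter, Finset.mem_union, Finset.mem_univ, true_and]
    rfl
  rw [hset, Finset.card_union_of_disjoint]
  rw [Finset.disjoint_left]
  intro x hx1 hx2
  simp only [Finset.mem_filter] at hx1 hx2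
  exact hl x (hx1.2.trans hx2.2.symm)

lemma sum_incident_eq {v : G.V} (F : G.E → ZMod 3) (h0 : ∀ f, ¬ G.Incident v f → F f = 0) :
    ∑ f, F f = ∑ f ∈ Finset.univ.filter (fun e => G.Incident v e), F f :=
  (Finset.sum_subset (Finset.filter_subset _ _)
    (fun x _ hx => h0 x (by simpa using hx))).symm

end MultiGraph
namespace MultiGraph

open Finset

variable {G : MultiGraph}

lemma delta_support {v : G.V} {y : G.E → ZMod 3} (hy : y ∈ G.DeltaSub v) {f : G.E}
    (hf : ¬ G.Incident v f) : y f = 0 := by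
  have hV : ∀ e, G.deltaV v e = ((G.sign v e : ℤ) : ZMod 3) := fun _ => rfl
  unfold DeltaSub at hy
  split_ifs at hy with h3
  · refine Submodule.span_induction (p := fun z _ => z f = 0) ?_ rfl ?_ ?_ hy
    · rintro g hg
      simp only [Set.mem_union, Set.mem_singleton_iff, Set.mem_setOf_eq] at hg
      rcases hg with rfl | ⟨e1, e2, hne, h1, h2, rfl⟩
      · rw [hV, sign_eq_zero hf]; rfl
      · unfold deltaPair
        rw [if_neg (fun hh : f = e1 => hf (hh ▸ h1)), if_neg (fun hh : f = e2 => hf (hh ▸ h2))]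
    · intro a b _ _ ha hb; rw [Pi.add_apply, ha, hb, add_zero]
    · intro c a _ ha; rw [Pi.smul_apply, ha, smul_zero]
  · obtain ⟨c, rfl⟩ := Submodule.mem_span_singleton.mp hy
    rw [Pi.smul_apply, hV, sign_eq_zero hf]
    simp

lemma delta_sign_dot (hl : ∀ e, G.tail e ≠ G.head e) {v : G.V} (h3 : G.degree v = 3)
    {y : G.E → ZMod 3} (hy : y ∈ G.DeltaSub v) :
    ∑ f, ((G.sign v f : ℤ) : ZMod 3) * y f = 0 := by
  unfold DeltaSub at hy
  rw [if_pos h3] at hy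
  refine Submodule.span_induction
    (p := fun z _ => ∑ f, ((G.sign v f : ℤ) : ZMod 3) * z f = 0) ?_ (by simp) ?_ ?_ hy
  · rintro g hg
    simp only [Set.mem_union, Set.mem_singleton_iff, Set.mem_setOf_eq] at hg
    rcases hg with rfl | ⟨e1, e2, hne, h1, h2, rfl⟩
    · have key : ∀ f, ((G.sign v f : ℤ) : ZMod 3) * G.deltaV v f
          = if G.Incident v f then (1 : ZMod 3) else 0 := by
        intro f
        by_cases hf : G.Incident v f
        · rw [if_pos hf]; exact sign_cast_sq (hl f) hf
        · rw [if_neg hf]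
          show _ * ((G.sign v f : ℤ) : ZMod 3) = 0
          rw [sign_eq_zero hf]; simp
      rw [Finset.sum_congr rfl (fun f _ => key f), Finset.sum_boole]
      rw [card_incident hl, h3]
      decide
    · unfold deltaPair
      have key : ∀ f, ((G.sign v f : ℤ) : ZMod 3) *
            (if f = e1 then ((G.sign v e1 : ℤ) : ZMod 3)
              else if f = e2 then -((G.sign v e2 : ℤ) : ZMod 3) else 0)
          = (if f = e1 then ((G.sign v e1 : ℤ) : ZMod 3) * ((G.sign v e1 : ℤ) : ZMod 3)
              else if f = e2 then -(((G.sign v e2 : ℤ) : ZMod 3) * ((G.sign v e2 : ℤ) : ZMod 3))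
              else 0) := by
        intro f
        by_cases hf1 : f = e1
        · subst hf1; simp
        · by_cases hf2 : f = e2
          · subst hf2; simp [hf1, mul_comm]
          · simp [hf1, hf2]
      rw [Finset.sum_congr rfl (fun f _ => key f),
        aux_sum_two hne (fun f => ((G.sign v e1 : ℤ) : ZMod 3) * ((G.sign v e1 : ℤ) : ZMod 3))
          (fun f => -(((G.sign v e2 : ℤ) : ZMod 3) * ((G.sign v e2 : ℤ) : ZMod 3)))]
      rw [sign_cast_sq (hl e1) h1, sign_cast_sq (hl e2) h2]
      decide
  · intro a b _ _ ha hb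
    simp only [Pi.add_apply, mul_add, Finset.sum_add_distrib, ha, hb, add_zero]
  · intro c a _ ha
    simp only [Pi.smul_apply, smul_eq_mul, mul_left_comm]
    rw [← Finset.mul_sum, ha, mul_zero]

lemma delta_dot_flow {φ : G.E → ZMod 3} (hφ : G.IsFlow φ) {v : G.V}
    {y : G.E → ZMod 3} (hy : y ∈ G.DeltaSub v)
    (hpair : G.degree v = 3 → ∀ e1 e2, e1 ≠ e2 → G.Incident v e1 → G.Incident v e2 →
      ((G.sign v e1 : ℤ) : ZMod 3) * φ e1 = ((G.sign v e2 : ℤ) : ZMod 3) * φ e2) :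
    ∑ f, y f * φ f = 0 := by
  have hcons : ∑ f, ((G.sign v f : ℤ) : ZMod 3) * φ f = 0 := by
    simpa [zsmul_eq_mul] using hφ v
  have hdel : ∑ f, G.deltaV v f * φ f = 0 := hcons
  have hzero : (fun z (_ : z ∈ G.DeltaSub v) => ∑ f, z f * φ f = 0) 0 (Submodule.zero_mem _) := by
    simp
  unfold DeltaSub at hy
  split_ifs at hy with h3
  · refine Submodule.span_induction (p := fun z _ => ∑ f, z f * φ f = 0) ?_ (by simp) ?_ ?_ hy
    · rintro g hg
      simp only [Set.mem_union, Set.mem_singleton_iff, Set.mem_setOf_eq] at hg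
      rcases hg with rfl | ⟨e1, e2, hne, h1, h2, rfl⟩
      · exact hdel
      · unfold deltaPair
        have key : ∀ f, (if f = e1 then ((G.sign v e1 : ℤ) : ZMod 3)
              else if f = e2 then -((G.sign v e2 : ℤ) : ZMod 3) else 0) * φ f
            = (if f = e1 then ((G.sign v e1 : ℤ) : ZMod 3) * φ e1
                else if f = e2 then -(((G.sign v e2 : ℤ) : ZMod 3) * φ e2) else 0) := by
          intro f
          by_cases hf1 : f = e1
          · subst hf1; simp
          · by_cases hf2 : f = e2
            · subst hf2; simp [hf1]
            · simp [hf1, hf2]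
        rw [Finset.sum_congr rfl (fun f _ => key f),
          aux_sum_two hne (fun _ => ((G.sign v e1 : ℤ) : ZMod 3) * φ e1)
            (fun _ => -(((G.sign v e2 : ℤ) : ZMod 3) * φ e2))]
        rw [hpair h3 e1 e2 hne h1 h2]
        ring
    · intro a b _ _ ha hb
      simp only [Pi.add_apply, add_mul, Finset.sum_add_distrib, ha, hb, add_zero]
    · intro c a _ ha
      simp only [Pi.smul_apply, smul_eq_mul, mul_assoc]
      rw [← Finset.mul_sum, ha, mul_zero]
  · obtain ⟨c, rfl⟩ := Submodule.mem_span_singleton.mp hy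
    simp only [Pi.smul_apply, smul_eq_mul, mul_assoc]
    rw [← Finset.mul_sum, hdel, mul_zero]

end MultiGraph
namespace MultiGraph

open Finset

variable {G : MultiGraph}

/-- The relation used in `contract`. -/
def crel (G : MultiGraph) (S : Set G.E) : G.V → G.V → Prop :=
  fun a b => ∃ e ∈ S, G.tail e = a ∧ G.head e = b

lemma contract_V (S : Set G.E) : (G.contract S).V = Quot (G.crel S) := rfl
lemma contract_E (S : Set G.E) : (G.contract S).E = {e : G.E // e ∉ S} := rfl

lemma contract_tail (S : Set G.E) (f : (G.contract S).E) :
    (G.contract S).tail f = (Quot.mk (G.crel S) (G.tail f.1) : Quot (G.crel S)) := rfl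

lemma contract_head (S : Set G.E) (f : (G.contract S).E) :
    (G.contract S).head f = (Quot.mk (G.crel S) (G.head f.1) : Quot (G.crel S)) := rfl

end MultiGraph
namespace MultiGraph

open Finset

variable {G : MultiGraph}

lemma contract_sign {S : Set G.E} {v : G.V}
    (hv : ∀ w, Quot.mk (G.crel S) w = Quot.mk (G.crel S) v ↔ w = v)
    (f : (G.contract S).E) :
    (G.contract S).sign (Quot.mk (G.crel S) v) f = G.sign v f.1 := by
  unfold sign
  rw [contract_head, contract_tail]
  classical
  congr 1 <;> convert if_congr (hv _) rfl rfl <;> rfl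

/-- Conservation of a contraction flow at a vertex whose class is a singleton. -/
lemma contract_cons {S : Set G.E} {ψ : (G.contract S).E → ZMod 3}
    (hψ : (G.contract S).IsFlow ψ) {v : G.V}
    (hv : ∀ w, Quot.mk (G.crel S) w = Quot.mk (G.crel S) v ↔ w = v) :
    ∑ f : (G.contract S).E, ((G.sign v f.1 : ℤ) : ZMod 3) * ψ f = 0 := by
  have h0 := hψ (Quot.mk (G.crel S) v)
  rw [← h0]
  refine Finset.sum_congr rfl fun f _ => ?_
  rw [contract_sign hv f, zsmul_eq_mul]

end MultiGraph
namespace MultiGraph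

open Finset

variable {G : MultiGraph}

lemma quot_inj_of_loop {e : G.E} (hloop : G.tail e = G.head e) (w v : G.V) :
    Quot.mk (G.crel ({e} : Set G.E)) w = Quot.mk (G.crel ({e} : Set G.E)) v ↔ w = v := by
  constructor
  · intro h
    have hp : ∀ y z, G.crel {e} y z → id y = id z := by
      rintro y z ⟨e', he', h1, h2⟩
      rw [← h1, ← h2, Set.mem_singleton_iff.mp he']
      exact hloop
    have h2 : id w = id v := congrArg (Quot.lift id hp) h
    exact h2
  · rintro rfl; rfl

lemma quot_inj_of_ne {e : G.E} {v : G.V} (hva : v ≠ G.tail e) (hvb : v ≠ G.head e) (w : G.V) :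
    Quot.mk (G.crel ({e} : Set G.E)) w = Quot.mk (G.crel ({e} : Set G.E)) v ↔ w = v := by
  constructor
  · intro h
    classical
    set p : G.V → G.V := (fun u => if u = G.head e then G.tail e else u) with hp_def
    have hp : ∀ y z, G.crel {e} y z → p y = p z := by
      rintro y z ⟨e', he', h1, h2⟩
      rw [← h1, ← h2, Set.mem_singleton_iff.mp he']
      simp only [hp_def]
      by_cases htb : G.tail e = G.head e <;> simp [htb]
    have h2 : p w = p v := congrArg (Quot.lift p hp) h
    have hpv : p v = v := if_neg hvb
    rw [hpv] at h2
    by_cases hwb : w = G.head e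
    · rw [hp_def] at h2
      simp only [if_pos hwb] at h2
      exact absurd h2.symm hva
    · rw [hp_def] at h2
      simpa only [if_neg hwb] using h2
  · rintro rfl; rfl

lemma no_loop (hNZ : ¬ G.HasNZFlow (ZMod 3))
    (hC : ∀ e : G.E, (G.contract {e}).HasNZFlow (ZMod 3)) :
    ∀ e : G.E, G.tail e ≠ G.head e := by
  intro e hloop
  obtain ⟨ψ, hψf, hψnz⟩ := hC e
  classical
  set φ : G.E → ZMod 3 := fun f => if h : f = e then 1 else ψ ⟨f, h⟩ with hφ
  apply hNZ
  refine ⟨φ, ?_, ?_⟩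
  · intro v
    rw [aux_sum_split (M := ZMod 3) (F := (G.contract {e}).fE) e (fun f => G.sign v f • φ f)]
    have h1 : G.sign v e • φ e = 0 := by
      unfold sign; rw [hloop]; simp
    rw [h1, zero_add]
    have h2 := contract_cons hψf (fun w => quot_inj_of_loop hloop w v)
    have key : ∀ f : {f : G.E // f ∉ ({e} : Set G.E)},
        G.sign v f.1 • φ f.1 = ((G.sign v f.1 : ℤ) : ZMod 3) * ψ f := by
      intro f
      rw [zsmul_eq_mul]
      congr 1
      exact dif_neg f.2
    rw [Finset.sum_congr rfl (fun f _ => key f)]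
    exact h2
  · intro f
    by_cases hf : f = e
    · subst hf
      have h1 : φ f = 1 := dif_pos rfl
      rw [h1]; exact one_ne_zero
    · have h1 : φ f = ψ ⟨f, hf⟩ := dif_neg hf
      rw [h1]; exact hψnz _

end MultiGraph
namespace MultiGraph

open Finset

variable {G : MultiGraph}

lemma exists_flow (hNZ : ¬ G.HasNZFlow (ZMod 3))
    (hC : ∀ e : G.E, (G.contract {e}).HasNZFlow (ZMod 3)) (e : G.E) :
    ∃ φ : G.E → ZMod 3, G.IsFlow φ ∧ φ e = 0 ∧ ∀ f, f ≠ e → φ f ≠ 0 := by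
  have hloop := no_loop hNZ hC
  have hab : G.tail e ≠ G.head e := hloop e
  obtain ⟨ψ, hψf, hψnz⟩ := hC e
  classical
  set ψ' : G.E → ZMod 3 := fun f => if h : f = e then 0 else ψ ⟨f, h⟩ with hψ'def
  set c : ZMod 3 := ∑ f, ((G.sign (G.tail e) f : ℤ) : ZMod 3) * ψ' f with hc
  set φ : G.E → ZMod 3 := fun f => if f = e then c else ψ' f with hφdef
  have hφe : φ e = c := if_pos rfl
  have hφne : ∀ f : G.E, f ≠ e → φ f = ψ' f := fun f hf => if_neg hf
  have hψ'sub : ∀ f : {f : G.E // f ∉ ({e} : Set G.E)}, ψ' f.1 = ψ f := fun f => dif_neg f.2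
  have hψ'e : ψ' e = 0 := dif_pos rfl
  have hgood : ∀ v, v ≠ G.tail e → v ≠ G.head e →
      ∑ f, ((G.sign v f : ℤ) : ZMod 3) * φ f = 0 := by
    intro v hva hvb
    rw [aux_sum_split (F := (G.contract {e}).fE) e
      (fun f => ((G.sign v f : ℤ) : ZMod 3) * φ f)]
    have hni : ¬ G.Incident v e := by
      rintro (h | h)
      exacts [hva h.symm, hvb h.symm]
    have h1 : ((G.sign v e : ℤ) : ZMod 3) * φ e = 0 := by
      rw [sign_eq_zero hni]; simp
    rw [h1, zero_add]
    have h2 := contract_cons hψf (fun w => quot_inj_of_ne hva hvb w)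
    refine Eq.trans (Finset.sum_congr rfl fun f _ => ?_) h2
    rw [hφne f.1 f.2, hψ'sub f]
  have ha' : ∑ f, ((G.sign (G.tail e) f : ℤ) : ZMod 3) * φ f = 0 := by
    rw [aux_sum_split e (fun f => ((G.sign (G.tail e) f : ℤ) : ZMod 3) * φ f)]
    have hsgn : G.sign (G.tail e) e = -1 := by
      unfold sign
      rw [if_neg (fun h : G.head e = G.tail e => hab h.symm), if_pos rfl]
      simp
    have hc2 : c = ∑ f : {f : G.E // f ∉ ({e} : Set G.E)},
        ((G.sign (G.tail e) f.1 : ℤ) : ZMod 3) * φ f.1 := by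
      rw [hc, aux_sum_split e
        (fun f => ((G.sign (G.tail e) f : ℤ) : ZMod 3) * ψ' f), hψ'e, mul_zero, zero_add]
      exact Finset.sum_congr rfl fun f _ => by rw [hφne f.1 f.2]
    rw [hφe, hsgn, ← hc2]
    push_cast
    ring
  have hsum0 : ∑ v, (∑ f, ((G.sign v f : ℤ) : ZMod 3) * φ f) = 0 := by
    rw [Finset.sum_comm]
    refine Finset.sum_eq_zero fun f _ => ?_
    rw [← Finset.sum_mul]
    have hz : ∑ v, ((G.sign v f : ℤ) : ZMod 3) = 0 := by
      rw [← Int.cast_sum]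
      have hz2 : ∑ v, G.sign v f = 0 := by
        unfold sign
        rw [Finset.sum_sub_distrib]
        simp [Finset.sum_ite_eq]
      rw [hz2]
      simp
    rw [hz, zero_mul]
  have hb' : ∑ f, ((G.sign (G.head e) f : ℤ) : ZMod 3) * φ f = 0 := by
    have hsp := Finset.sum_eq_single (s := Finset.univ)
      (f := fun v => ∑ f, ((G.sign v f : ℤ) : ZMod 3) * φ f) (G.head e)
      (fun v _ hvb => by
        by_cases hva : v = G.tail e
        · subst hva; exact ha'
        · exact hgood v hva hvb)
      (fun h => absurd (Finset.mem_univ _) h)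
    have hsp' : ∑ v : G.V, ∑ f : G.E, ((G.sign v f : ℤ) : ZMod 3) * φ f
        = ∑ f : G.E, ((G.sign (G.head e) f : ℤ) : ZMod 3) * φ f := hsp
    exact hsp'.symm.trans hsum0
  have hflow : G.IsFlow φ := by
    intro v
    simp only [zsmul_eq_mul]
    by_cases hv1 : v = G.head e
    · subst hv1; exact hb'
    by_cases hv2 : v = G.tail e
    · subst hv2; exact ha'
    exact hgood v hv2 hv1
  have hnz : ∀ f, f ≠ e → φ f ≠ 0 := by
    intro f hf
    rw [hφne f hf, show ψ' f = ψ ⟨f, hf⟩ from dif_neg hf]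
    exact hψnz _
  have hze : φ e = 0 := by
    by_contra hne0
    refine hNZ ⟨φ, hflow, fun f => ?_⟩
    by_cases hf : f = e
    · subst hf; exact hne0
    · exact hnz f hf
  exact ⟨φ, hflow, hze, hnz⟩

end MultiGraph
namespace MultiGraph

open Finset

variable {G : MultiGraph}

lemma zmod3_three_eq {p q r : ZMod 3} (hp : p ≠ 0) (hq : q ≠ 0) (hr : r ≠ 0)
    (hs : p + (q + r) = 0) : p = q := by revert hp hq hr hs; revert p q r; decide

/-- At a degree-3 vertex all of whose incident edges carry a nonzero flow value,
the inflow values coincide. -/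
lemma flow_pair (hl : ∀ e, G.tail e ≠ G.head e) {φ : G.E → ZMod 3} (hφ : G.IsFlow φ)
    {v : G.V} (h3 : G.degree v = 3) (hnz : ∀ f, G.Incident v f → φ f ≠ 0) :
    ∀ e1 e2, e1 ≠ e2 → G.Incident v e1 → G.Incident v e2 →
      ((G.sign v e1 : ℤ) : ZMod 3) * φ e1 = ((G.sign v e2 : ℤ) : ZMod 3) * φ e2 := by
  intro e1 e2 hne h1 h2
  set t : G.E → ZMod 3 := fun f => ((G.sign v f : ℤ) : ZMod 3) * φ f with ht
  set I : Finset G.E := Finset.univ.filter (fun f => G.Incident v f) with hI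
  have hIcard : I.card = 3 := by rw [hI, card_incident hl, h3]
  have h1' : e1 ∈ I := by rw [hI]; exact Finset.mem_filter.mpr ⟨Finset.mem_univ _, h1⟩
  have h2' : e2 ∈ I := by rw [hI]; exact Finset.mem_filter.mpr ⟨Finset.mem_univ _, h2⟩
  have h2'' : e2 ∈ I.erase e1 := Finset.mem_erase.mpr ⟨hne.symm, h2'⟩
  have hJcard : ((I.erase e1).erase e2).card = 1 := by
    rw [Finset.card_erase_of_mem h2'', Finset.card_erase_of_mem h1', hIcard]
  obtain ⟨e3, hJ⟩ := Finset.card_eq_one.mp hJcard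
  have h3' : e3 ∈ I := by
    have : e3 ∈ (I.erase e1).erase e2 := by rw [hJ]; exact Finset.mem_singleton_self _
    exact Finset.mem_of_mem_erase (Finset.mem_of_mem_erase this)
  have h3I : G.Incident v e3 := by
    rw [hI] at h3'; exact (Finset.mem_filter.mp h3').2
  have hIsum : ∑ f ∈ I, t f = 0 := by
    have hcons : ∑ f, t f = 0 := by
      have := hφ v
      simpa [ht, zsmul_eq_mul] using this
    rw [← sum_incident_eq t (fun f hf => by rw [ht]; simp [sign_eq_zero hf])]
    exact hcons
  rw [← Finset.add_sum_erase I t h1', ← Finset.add_sum_erase (I.erase e1) t h2'', hJ,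
    Finset.sum_singleton] at hIsum
  have hnz1 : t e1 ≠ 0 := mul_ne_zero (sign_cast_ne (hl e1) h1) (hnz e1 h1)
  have hnz2 : t e2 ≠ 0 := mul_ne_zero (sign_cast_ne (hl e2) h2) (hnz e2 h2)
  have hnz3 : t e3 ≠ 0 := mul_ne_zero (sign_cast_ne (hl e3) h3I) (hnz e3 h3I)
  exact zmod3_three_eq hnz1 hnz2 hnz3 hIsum

end MultiGraph
namespace MultiGraph

open Finset

variable {G : MultiGraph}

lemma zmod3_final {sf sg xf xg pf pg : ZMod 3} (hsf : sf * sf = 1) (hsg : sg * sg = 1)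
    (hpf : pf ≠ 0) (hpg : pg ≠ 0) (hz : sf * xf + sg * xg = 0) (ht : sf * pf + sg * pg = 0)
    (hd : xf * pf + xg * pg = 0) : xf = 0 ∧ xg = 0 := by
  revert hsf hsg hpf hpg hz ht hd; revert sf sg xf xg pf pg; decide

lemma step (hNZ : ¬ G.HasNZFlow (ZMod 3))
    (hC : ∀ e : G.E, (G.contract {e}).HasNZFlow (ZMod 3))
    (x : G.V → (G.E → ZMod 3)) (hx : ∀ v : G.V, x v ∈ G.DeltaSub v)
    (hsum : ∑ v : G.V, x v = 0) {a b : G.V} (hadj : G.Adj a b) (ha : x a = 0) :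
    x b = 0 := by
  by_cases hab : a = b
  · subst hab; exact ha
  obtain ⟨e, he⟩ := hadj
  have hloop := no_loop hNZ hC
  have hib : G.Incident b e := by
    rcases he with ⟨h1, h2⟩ | ⟨h1, h2⟩
    · exact Or.inr h2
    · exact Or.inl h1
  have hends : ∀ v, G.Incident v e → v = a ∨ v = b := by
    intro v hv
    rcases he with ⟨h1, h2⟩ | ⟨h1, h2⟩ <;> rcases hv with h | h
    · exact Or.inl ((h1.symm.trans h).symm ▸ rfl)
    · exact Or.inr ((h2.symm.trans h).symm ▸ rfl)
    · exact Or.inr ((h1.symm.trans h).symm ▸ rfl)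
    · exact Or.inl ((h2.symm.trans h).symm ▸ rfl)
  obtain ⟨φ, hφf, hφe, hφnz⟩ := exists_flow hNZ hC e
  have hcoordf : ∀ f : G.E, ∑ v, x v f = 0 := by
    intro f
    have h0 : (∑ v, x v) f = 0 := by rw [hsum]; rfl
    simpa using h0
  have hcoord : x b e = 0 := by
    have h0 := hcoordf e
    rw [Finset.sum_eq_single b (fun v _ hvb => ?_) (fun h => absurd (Finset.mem_univ _) h)] at h0
    · exact h0
    · by_cases hva : v = a
      · subst hva; rw [ha]; rfl
      · refine delta_support (hx v) ?_
        intro hi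
        rcases hends v hi with rfl | rfl
        exacts [hva rfl, hvb rfl]
  have hdot : ∑ f, x b f * φ f = 0 := by
    have h0 : ∑ v, (∑ f, x v f * φ f) = 0 := by
      rw [Finset.sum_comm]
      refine Finset.sum_eq_zero fun f _ => ?_
      rw [← Finset.sum_mul, hcoordf f, zero_mul]
    rw [Finset.sum_eq_single b (fun v _ hvb => ?_) (fun h => absurd (Finset.mem_univ _) h)] at h0
    · exact h0
    · by_cases hva : v = a
      · subst hva; rw [ha]; simp
      · refine delta_dot_flow hφf (hx v) ?_
        intro h3 e1 e2 hne h1 h2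
        refine flow_pair hloop hφf h3 (fun f hf => hφnz f ?_) e1 e2 hne h1 h2
        intro hfe
        subst hfe
        rcases hends v hf with rfl | rfl
        exacts [hva rfl, hvb rfl]
  by_cases h3 : G.degree b = 3
  · set I := Finset.univ.filter (fun f => G.Incident b f) with hI
    have hIcard : I.card = 3 := by rw [hI, card_incident hloop, h3]
    have heI : e ∈ I := Finset.mem_filter.mpr ⟨Finset.mem_univ _, hib⟩
    have hI2 : (I.erase e).card = 2 := by rw [Finset.card_erase_of_mem heI, hIcard]
    obtain ⟨f, g, hfg, hfgI⟩ := Finset.card_eq_two.mp hI2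
    have hfI' : f ∈ I.erase e := by rw [hfgI]; exact Finset.mem_insert_self _ _
    have hgI' : g ∈ I.erase e := by
      rw [hfgI]; exact Finset.mem_insert_of_mem (Finset.mem_singleton_self _)
    have hfe : f ≠ e := (Finset.mem_erase.mp hfI').1
    have hge : g ≠ e := (Finset.mem_erase.mp hgI').1
    have hfI : G.Incident b f := (Finset.mem_filter.mp (Finset.mem_of_mem_erase hfI')).2
    have hgI : G.Incident b g := (Finset.mem_filter.mp (Finset.mem_of_mem_erase hgI')).2
    have hexp : ∀ F : G.E → ZMod 3, (∀ h', ¬ G.Incident b h' → F h' = 0) →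
        ∑ h', F h' = F e + (F f + F g) := by
      intro F hF
      rw [sum_incident_eq F hF, ← hI, ← Finset.add_sum_erase I F heI, hfgI,
        Finset.sum_pair hfg]
    have hzsum : ((G.sign b e : ℤ) : ZMod 3) * x b e +
        (((G.sign b f : ℤ) : ZMod 3) * x b f + ((G.sign b g : ℤ) : ZMod 3) * x b g) = 0 := by
      rw [← hexp (fun h' => ((G.sign b h' : ℤ) : ZMod 3) * x b h')
        (fun h' hh => by beta_reduce; rw [sign_eq_zero hh]; simp)]
      exact delta_sign_dot hloop h3 (hx b)
    have htsum : ((G.sign b e : ℤ) : ZMod 3) * φ e +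
        (((G.sign b f : ℤ) : ZMod 3) * φ f + ((G.sign b g : ℤ) : ZMod 3) * φ g) = 0 := by
      rw [← hexp (fun h' => ((G.sign b h' : ℤ) : ZMod 3) * φ h')
        (fun h' hh => by beta_reduce; rw [sign_eq_zero hh]; simp)]
      simpa [zsmul_eq_mul] using hφf b
    have hdsum : x b e * φ e + (x b f * φ f + x b g * φ g) = 0 := by
      rw [← hexp (fun h' => x b h' * φ h')
        (fun h' hh => by beta_reduce; rw [delta_support (hx b) hh, zero_mul])]
      exact hdot
    rw [hcoord, mul_zero, zero_add] at hzsum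
    rw [hφe, mul_zero, zero_add] at htsum
    rw [hφe, mul_zero, zero_add] at hdsum
    obtain ⟨hxf, hxg⟩ := zmod3_final (sign_cast_sq (hloop f) hfI) (sign_cast_sq (hloop g) hgI)
      (hφnz f hfe) (hφnz g hge) hzsum htsum hdsum
    funext h'
    by_cases hh : G.Incident b h'
    · have hmem : h' ∈ I := Finset.mem_filter.mpr ⟨Finset.mem_univ _, hh⟩
      rw [← Finset.insert_erase heI, hfgI] at hmem
      rcases Finset.mem_insert.mp hmem with rfl | hh2
      · exact hcoord
      rcases Finset.mem_insert.mp hh2 with rfl | hh3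
      · exact hxf
      · rw [Finset.mem_singleton.mp hh3]; exact hxg
    · exact delta_support (hx b) hh
  · have hy := hx b
    unfold DeltaSub at hy
    rw [if_neg h3] at hy
    obtain ⟨cb, hcb⟩ := Submodule.mem_span_singleton.mp hy
    have hce : cb * ((G.sign b e : ℤ) : ZMod 3) = 0 := by
      have h1 : (cb • G.deltaV b) e = x b e := congrFun hcb e
      rw [hcoord] at h1
      rw [← h1, Pi.smul_apply, smul_eq_mul]
      rfl
    have hcb0 : cb = 0 := by
      rcases mul_eq_zero.mp hce with h | h
      · exact h
      · exact absurd h (sign_cast_ne (hloop e) hib)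
    rw [← hcb, hcb0, zero_smul]

end MultiGraph
open MultiGraph in
/-- If `G` is `ℤ/3`-flow-critical, `x_v ∈ Δ_v` for every vertex `v`,
`∑_v x_v = 0` and `x_u = 0` for some vertex `u`, then `x_w = 0` for every `w`. -/
theorem all_zero_of_sum_zero (G : MultiGraph) (hG : G.FlowCritical (ZMod 3))
    (x : G.V → (G.E → ZMod 3)) (hx : ∀ v : G.V, x v ∈ G.DeltaSub v)
    (hsum : ∑ v : G.V, x v = 0) (u : G.V) (hu : x u = 0) :
    ∀ w : G.V, x w = 0 := by
  obtain ⟨⟨-, hconn⟩, hNZ, hC⟩ := hG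
  intro w
  have h := hconn u w
  induction h with
  | refl => exact hu
  | tail _ hadj ih => exact step hNZ hC x hx hsum hadj ih
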